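/- Let R = ℂ[U₁,V₁,V₂,W₁,W₂] and let M ⊆ R² be the R-submodule generated by the vectors (W₂,0), (V₁,0), (−2V₂+3W₁, 2U₁), (V₁, 3W₁), (W₂, V₁), (0, W₂), (V₂+W₁, 0), (0, V₂+W₁), (U₁, 0), (0, U₁). Then M contains m·R², where m = (U₁,V₁,V₂,W₁,W₂) is the irrelevant maximal ideal; equivalently M + ℂ·(1,0) + ℂ·(0,1) = R² and R²/M has ℂ-dimension 2. -/

import Mathlib

open MvPolynomial

/-- `R = ℂ[U₁,V₁,V₂,W₁,W₂]`, with `U₁ = X 0`, `V₁ = X 1`, `V₂ = X 2`, `W₁ = X 3`, `W₂ = X 4`. -/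
noncomputable abbrev R5 : Type := MvPolynomial (Fin 5) ℂ

/-- The ten generators of the tangent-space module of Example 5.1. -/
noncomputable def gens5 : Set (R5 × R5) :=
  {(X 4, 0), (X 1, 0), (-2 * X 2 + 3 * X 3, 2 * X 0), (X 1, 3 * X 3), (X 4, X 1),
    (0, X 4), (X 2 + X 3, 0), (0, X 2 + X 3), (X 0, 0), (0, X 0)}

noncomputable abbrev S5 : Submodule R5 (R5 × R5) := Submodule.span R5 gens5

lemma g1 : ((X 4, 0) : R5 × R5) ∈ S5 := Submodule.subset_span (by simp [gens5])
lemma g2 : ((X 1, 0) : R5 × R5) ∈ S5 := Submodule.subset_span (by simp [gens5])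
lemma g3 : ((-2 * X 2 + 3 * X 3, 2 * X 0) : R5 × R5) ∈ S5 := Submodule.subset_span (by simp [gens5])
lemma g4 : ((X 1, 3 * X 3) : R5 × R5) ∈ S5 := Submodule.subset_span (by simp [gens5])
lemma g5 : ((X 4, X 1) : R5 × R5) ∈ S5 := Submodule.subset_span (by simp [gens5])
lemma g6 : ((0, X 4) : R5 × R5) ∈ S5 := Submodule.subset_span (by simp [gens5])
lemma g7 : ((X 2 + X 3, 0) : R5 × R5) ∈ S5 := Submodule.subset_span (by simp [gens5])
lemma g8 : ((0, X 2 + X 3) : R5 × R5) ∈ S5 := Submodule.subset_span (by simp [gens5])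
lemma g9 : ((X 0, 0) : R5 × R5) ∈ S5 := Submodule.subset_span (by simp [gens5])
lemma g10 : ((0, X 0) : R5 × R5) ∈ S5 := Submodule.subset_span (by simp [gens5])

lemma c_smul (a : ℂ) (ha : a ≠ 0) (v : R5 × R5) (h : (C a : R5) • v ∈ S5) : v ∈ S5 := by
  have := S5.smul_mem (C a⁻¹) h
  rwa [smul_smul, ← C_mul, inv_mul_cancel₀ ha, C_1, one_smul] at this

lemma hX2 : ((X 2, 0) : R5 × R5) ∈ S5 := by
  apply c_smul 5 (by norm_num)
  have h : (C 5 : R5) • ((X 2, 0) : R5 × R5) = (3 : R5) • ((X 2 + X 3, 0) : R5 × R5)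
      + (-1 : R5) • ((-2 * X 2 + 3 * X 3, 2 * X 0) : R5 × R5)
      + (2 : R5) • ((0, X 0) : R5 × R5) := by
    simp only [Prod.smul_mk, Prod.mk_add_mk, Prod.mk.injEq, smul_eq_mul]
    constructor <;> (rw [show (C 5 : R5) = 5 from map_ofNat _ 5]; ring)
  rw [h]
  exact Submodule.add_mem _ (Submodule.add_mem _ (S5.smul_mem _ g7) (S5.smul_mem _ g3))
    (S5.smul_mem _ g10)

lemma hX3 : ((X 3, 0) : R5 × R5) ∈ S5 := by
  have h : ((X 3, 0) : R5 × R5) = ((X 2 + X 3, 0) : R5 × R5) - ((X 2, 0) : R5 × R5) := by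
    simp [Prod.ext_iff]; try ring
  rw [h]; exact Submodule.sub_mem _ g7 hX2

lemma hX3' : ((0, X 3) : R5 × R5) ∈ S5 := by
  apply c_smul 3 (by norm_num)
  have h : (C 3 : R5) • ((0, X 3) : R5 × R5)
      = ((X 1, 3 * X 3) : R5 × R5) - ((X 1, 0) : R5 × R5) := by
    simp only [Prod.smul_mk, Prod.mk_sub_mk, Prod.mk.injEq, smul_eq_mul]
    constructor <;> (rw [show (C 3 : R5) = 3 from map_ofNat _ 3]; ring)
  rw [h]; exact Submodule.sub_mem _ g4 g2

lemma hX2' : ((0, X 2) : R5 × R5) ∈ S5 := by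
  have h : ((0, X 2) : R5 × R5) = ((0, X 2 + X 3) : R5 × R5) - ((0, X 3) : R5 × R5) := by
    simp [Prod.ext_iff]; try ring
  rw [h]; exact Submodule.sub_mem _ g8 hX3'

lemma hX1' : ((0, X 1) : R5 × R5) ∈ S5 := by
  have h : ((0, X 1) : R5 × R5) = ((X 4, X 1) : R5 × R5) - ((X 4, 0) : R5 × R5) := by
    simp [Prod.ext_iff]
  rw [h]; exact Submodule.sub_mem _ g5 g1

lemma part1 (i : Fin 5) : ((X i, 0) : R5 × R5) ∈ S5 ∧ ((0, X i) : R5 × R5) ∈ S5 := by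
  fin_cases i
  · exact ⟨g9, g10⟩
  · exact ⟨g2, hX1'⟩
  · exact ⟨hX2, hX2'⟩
  · exact ⟨hX3, hX3'⟩
  · exact ⟨g1, g6⟩

lemma sub_const_left (p : R5) : ((p - C (constantCoeff p), 0) : R5 × R5) ∈ S5 := by
  induction p using MvPolynomial.induction_on with
  | C a => simp; exact Submodule.zero_mem _
  | add p q hp hq =>
      have h : (((p + q) - C (constantCoeff (p + q)), 0) : R5 × R5)
          = ((p - C (constantCoeff p), 0) : R5 × R5) + ((q - C (constantCoeff q), 0) : R5 × R5) := by
        simp [Prod.ext_iff]; try ring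
      rw [h]; exact Submodule.add_mem _ hp hq
  | mul_X p i hp =>
      have h : ((p * X i - C (constantCoeff (p * X i)), 0) : R5 × R5) = p • ((X i, 0) : R5 × R5) := by
        simp [Prod.ext_iff, constantCoeff_X, smul_eq_mul]
      rw [h]; exact S5.smul_mem p (part1 i).1

lemma sub_const_right (q : R5) : ((0, q - C (constantCoeff q)) : R5 × R5) ∈ S5 := by
  induction q using MvPolynomial.induction_on with
  | C a => simp; exact Submodule.zero_mem _
  | add p q hp hq =>
      have h : ((0, (p + q) - C (constantCoeff (p + q))) : R5 × R5)
          = ((0, p - C (constantCoeff p)) : R5 × R5) + ((0, q - C (constantCoeff q)) : R5 × R5) := by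
        simp [Prod.ext_iff]; try ring
      rw [h]; exact Submodule.add_mem _ hp hq
  | mul_X p i hp =>
      have h : ((0, p * X i - C (constantCoeff (p * X i))) : R5 × R5) = p • ((0, X i) : R5 × R5) := by
        simp [Prod.ext_iff, constantCoeff_X, smul_eq_mul]
      rw [h]; exact S5.smul_mem p (part1 i).2

lemma part2 (f : R5 × R5) : ∃ a b : ℂ, f - (C a, C b) ∈ S5 := by
  refine ⟨constantCoeff f.1, constantCoeff f.2, ?_⟩
  have h : f - (C (constantCoeff f.1), C (constantCoeff f.2))
      = ((f.1 - C (constantCoeff f.1), 0) : R5 × R5)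
        + ((0, f.2 - C (constantCoeff f.2)) : R5 × R5) := by
    simp [Prod.ext_iff]
  rw [h]; exact Submodule.add_mem _ (sub_const_left f.1) (sub_const_right f.2)

noncomputable abbrev I5 : Ideal R5 := RingHom.ker (constantCoeff : R5 →+* ℂ)

lemma S5_le_prod : S5 ≤ Submodule.prod I5 I5 := by
  rw [Submodule.span_le]
  intro g hg
  simp only [gens5, Set.mem_insert_iff, Set.mem_singleton_iff] at hg
  rcases hg with h | h | h | h | h | h | h | h | h | h <;>
    (subst h; simp [Submodule.mem_prod, RingHom.mem_ker])

lemma const_mem (a b : ℂ) (h : ((C a, C b) : R5 × R5) ∈ S5) : a = 0 ∧ b = 0 := by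
  have := S5_le_prod h
  simp only [Submodule.mem_prod, RingHom.mem_ker, constantCoeff_C] at this
  exact this

theorem tangent_module_contains_max_ideal :
    (∀ i : Fin 5, ((X i, 0) : R5 × R5) ∈ Submodule.span R5 gens5 ∧
      ((0, X i) : R5 × R5) ∈ Submodule.span R5 gens5) ∧
    (∀ f : R5 × R5, ∃ a b : ℂ, f - (C a, C b) ∈ Submodule.span R5 gens5) ∧
    Module.finrank ℂ ((R5 × R5) ⧸ (Submodule.span R5 gens5).restrictScalars ℂ) = 2 := by
  refine ⟨part1, part2, ?_⟩
  set M := (Submodule.span R5 gens5).restrictScalars ℂ with hM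
  let φ : (ℂ × ℂ) →ₗ[ℂ] ((R5 × R5) ⧸ M) :=
    M.mkQ.comp ((Algebra.linearMap ℂ R5).prodMap (Algebra.linearMap ℂ R5))
  have hinj : Function.Injective φ := by
    rw [← LinearMap.ker_eq_bot, LinearMap.ker_eq_bot']
    intro ⟨a, b⟩ h
    have hmem : ((C a, C b) : R5 × R5) ∈ S5 := by
      have := (Submodule.Quotient.mk_eq_zero M).mp h
      exact (by simpa [MvPolynomial.algebraMap_eq] using this : ((C a, C b) : R5 × R5) ∈ M)
    obtain ⟨ha, hb⟩ := const_mem a b hmem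
    simp [ha, hb]
  have hsurj : Function.Surjective φ := by
    intro q
    obtain ⟨f, rfl⟩ := Submodule.mkQ_surjective M q
    obtain ⟨a, b, hab⟩ := part2 f
    refine ⟨(a, b), ?_⟩
    show M.mkQ ((algebraMap ℂ R5 a, algebraMap ℂ R5 b)) = M.mkQ f
    rw [Submodule.mkQ_apply, Submodule.mkQ_apply, Submodule.Quotient.eq]
    have h2 : ((C a, C b) : R5 × R5) - f ∈ S5 := by simpa using Submodule.neg_mem _ hab
    exact h2
  have := (LinearEquiv.ofBijective φ ⟨hinj, hsurj⟩).finrank_eq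
  rw [← this]
  simp [Module.finrank_prod]
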